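/- Let f : F_2^d → F_2 and D : F_2^{d+1} → F_2 be predicates, and suppose that |Pr_{X}[D(X, f(X)) = 1] − Pr_{Y}[D(Y) = 1]| > ε, where X is uniform on F_2^d and Y is uniform on F_2^{d+1}. Then there exist fixed bits a_0, a_1 ∈ F_2 such that Pr_{X}[D(X, a_0) + a_1 = f(X)] > 1/2 + ε, where X is uniform on F_2^d and addition is over F_2. -/

import Mathlib

private lemma sum_zmod2' (h : ZMod 2 → ℕ) : ∑ b : ZMod 2, h b = h 0 + h 1 := by
  have : (Finset.univ : Finset (ZMod 2)) = {0, 1} := by decide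
  rw [this, Finset.sum_insert (by decide), Finset.sum_singleton]

private lemma main_count (d : ℕ) (f : (Fin d → ZMod 2) → ZMod 2)
    (D : (Fin d → ZMod 2) → ZMod 2 → ZMod 2) :
    (Finset.univ.filter (fun x : Fin d → ZMod 2 => D x 0 + 1 = f x)).card
    + (Finset.univ.filter (fun x : Fin d → ZMod 2 => D x 1 + 0 = f x)).card
    + (Finset.univ.filter (fun y : (Fin d → ZMod 2) × ZMod 2 => D y.1 y.2 = 1)).card
    = 2 * (Finset.univ.filter (fun x : Fin d → ZMod 2 => D x (f x) = 1)).card + 2 ^ d := by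
  classical
  have key : ∀ x : Fin d → ZMod 2,
      (if D x 0 + 1 = f x then 1 else 0) + (if D x 1 + 0 = f x then 1 else 0)
      + ((if D x 0 = 1 then 1 else 0) + (if D x 1 = 1 then 1 else 0))
      = 2 * (if D x (f x) = 1 then 1 else 0) + 1 := by
    intro x
    have hw : ∀ w : ZMod 2, w = 0 ∨ w = 1 := by decide
    rcases hw (f x) with h | h <;> rw [h] <;>
      generalize D x 0 = u <;> generalize D x 1 = v <;> revert u v <;> decide
  have hcard : (2:ℕ) ^ d = Fintype.card (Fin d → ZMod 2) := by
    simp [Fintype.card_fun]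
  rw [hcard]
  simp only [Finset.card_eq_sum_ones, Finset.sum_filter, Fintype.sum_prod_type, sum_zmod2',
    Fintype.card, Finset.mul_sum, ← Finset.sum_add_distrib]
  exact Finset.sum_congr rfl fun x _ => key x

private lemma compl_count (d : ℕ) (f : (Fin d → ZMod 2) → ZMod 2)
    (D : (Fin d → ZMod 2) → ZMod 2 → ZMod 2) (a b b' : ZMod 2)
    (hb : ∀ u w : ZMod 2, (u + b' = w) ↔ ¬ (u + b = w)) :
    (Finset.univ.filter (fun x : Fin d → ZMod 2 => D x a + b = f x)).card
    + (Finset.univ.filter (fun x : Fin d → ZMod 2 => D x a + b' = f x)).card = 2 ^ d := by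
  classical
  rw [Finset.filter_congr (fun x _ => hb (D x a) (f x)),
    Finset.card_filter_add_card_filter_not]
  simp [Fintype.card_fun]

/-- Distinguishers can be turned into predictors. -/
theorem stmt2 (d : ℕ) (f : (Fin d → ZMod 2) → ZMod 2)
    (D : (Fin d → ZMod 2) → ZMod 2 → ZMod 2) (ε : ℝ)
    (hbias : ε <
      |((Finset.univ.filter (fun x : Fin d → ZMod 2 => D x (f x) = 1)).card : ℝ) / 2 ^ d -
        ((Finset.univ.filter
          (fun y : (Fin d → ZMod 2) × ZMod 2 => D y.1 y.2 = 1)).card : ℝ) / 2 ^ (d + 1)|) :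
    ∃ a₀ a₁ : ZMod 2,
      1 / 2 + ε <
        ((Finset.univ.filter
          (fun x : Fin d → ZMod 2 => D x a₀ + a₁ = f x)).card : ℝ) / 2 ^ d := by
  classical
  set c01 := (Finset.univ.filter (fun x : Fin d → ZMod 2 => D x 0 + 1 = f x)).card with hc01
  set c10 := (Finset.univ.filter (fun x : Fin d → ZMod 2 => D x 1 + 0 = f x)).card with hc10
  set c00 := (Finset.univ.filter (fun x : Fin d → ZMod 2 => D x 0 + 0 = f x)).card with hc00
  set c11 := (Finset.univ.filter (fun x : Fin d → ZMod 2 => D x 1 + 1 = f x)).card with hc11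
  set cf := (Finset.univ.filter (fun x : Fin d → ZMod 2 => D x (f x) = 1)).card with hcf
  set T := (Finset.univ.filter (fun y : (Fin d → ZMod 2) × ZMod 2 => D y.1 y.2 = 1)).card with hT
  have hmain : c01 + c10 + T = 2 * cf + 2 ^ d := main_count d f D
  have h0 : c01 + c00 = 2 ^ d := compl_count d f D 0 1 0 (by decide)
  have h1 : c11 + c10 = 2 ^ d := compl_count d f D 1 1 0 (by decide)
  have hN : (0:ℝ) < 2 ^ d := by positivity
  have hmainR : (c01 : ℝ) + c10 + T = 2 * cf + 2 ^ d := by exact_mod_cast hmain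
  have h0R : (c01 : ℝ) + c00 = 2 ^ d := by exact_mod_cast h0
  have h1R : (c11 : ℝ) + c10 = 2 ^ d := by exact_mod_cast h1
  have hT2 : ((T : ℝ) / 2 ^ (d+1)) * (2 * 2 ^ d) = T := by
    have h2 : ((2:ℝ) ^ (d+1)) ≠ 0 := by positivity
    field_simp
    ring
  have hcf2 : ((cf : ℝ) / 2 ^ d) * 2 ^ d = cf := by field_simp
  rcases lt_abs.mp hbias with h | h
  · -- cf/2^d - T/2^(d+1) > ε : use (0,1) or (1,0)
    have hsum : (1 / 2 + ε) * 2 ^ d * 2 < (c01 : ℝ) + c10 := by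
      have := mul_lt_mul_of_pos_right h hN
      nlinarith [hT2, hcf2]
    rcases le_total c01 c10 with hle | hle
    · refine ⟨1, 0, ?_⟩
      rw [lt_div_iff₀ hN]
      have : (c01 : ℝ) ≤ c10 := by exact_mod_cast hle
      linarith
    · refine ⟨0, 1, ?_⟩
      rw [lt_div_iff₀ hN]
      have : (c10 : ℝ) ≤ c01 := by exact_mod_cast hle
      linarith
  · -- T/2^(d+1) - cf/2^d > ε : use (0,0) or (1,1)
    have hsum : (1 / 2 + ε) * 2 ^ d * 2 < (c00 : ℝ) + c11 := by
      have := mul_lt_mul_of_pos_right h hN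
      nlinarith [hT2, hcf2]
    rcases le_total c00 c11 with hle | hle
    · refine ⟨1, 1, ?_⟩
      rw [lt_div_iff₀ hN]
      have : (c00 : ℝ) ≤ c11 := by exact_mod_cast hle
      linarith
    · refine ⟨0, 0, ?_⟩
      rw [lt_div_iff₀ hN]
      have : (c11 : ℝ) ≤ c00 := by exact_mod_cast hle
      linarith
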